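/- Let p be a prime, q = p^d, and let G ≤ AΓL(1,q) act 2-transitively on F_q. Let s be the smallest positive integer such that t(a,s) ∈ G_0 for some a ∈ F_q^×, m the smallest positive integer such that t(1,ms) ∈ G_0, and H := {a ∈ F_q^× : t(a,0) ∈ G_0}. Then a subset P of F_q^× with 1 ∈ P is an imprimitive block for the action of G_0 on F_q^× if and only if there exist a divisor e of m, a subgroup K of H, and an element w ∈ F_q^× with t(w, es) ∈ G_0, such that w^{[ψ, m/e]} ∈ K and P = K ∪ w^{[ψ,1]}K ∪ w^{[ψ,2]}K ∪ ⋯ ∪ w^{[ψ, m/e − 1]}K, where ψ denotes the field automorphism z ↦ z^{p^{es}}. -/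

import Mathlib

def scalarFrob {F : Type*} [Field F] (G : Subgroup (Equiv.Perm F)) (p : ℕ)
    (a : F) (k : ℕ) : Prop :=
  ∃ g ∈ G, ∀ z : F, g z = a * z ^ p ^ k

section aux

lemma aux_geom_mul (x n : ℕ) (hx : 1 ≤ x) :
    (x - 1) * ∑ i ∈ Finset.range n, x ^ i = x ^ n - 1 := by
  induction n with
  | zero => simp
  | succ n ih =>
    rw [Finset.sum_range_succ, Nat.mul_add, ih, Nat.sub_mul, one_mul]
    have h1 : 1 ≤ x ^ n := Nat.one_le_pow _ _ hx
    have h2 : x ^ (n + 1) = x * x ^ n := by rw [pow_succ, mul_comm]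
    have h3 : x ^ n ≤ x * x ^ n := Nat.le_mul_of_pos_left _ hx
    omega

lemma aux_geom_div (x n : ℕ) (hx : 2 ≤ x) :
    (x ^ n - 1) / (x - 1) = ∑ i ∈ Finset.range n, x ^ i := by
  rw [← aux_geom_mul x n (by omega), Nat.mul_div_cancel_left _ (by omega)]

lemma aux_gsum_add (x a b : ℕ) :
    ∑ i ∈ Finset.range (a + b), x ^ i
      = (∑ i ∈ Finset.range a, x ^ i) + x ^ a * ∑ i ∈ Finset.range b, x ^ i := by
  rw [Finset.sum_range_add, Finset.mul_sum]
  simp [pow_add]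

lemma least_dvd_all {T : Set ℕ} {D t : ℕ} (hD : 0 < D)
    (hadd : ∀ a ∈ T, ∀ b ∈ T, a + b ∈ T)
    (hmod : ∀ a ∈ T, ∀ b : ℕ, a % D = b % D → b ∈ T)
    (ht : IsLeast {k | 0 < k ∧ k ∈ T} t) : ∀ k ∈ T, t ∣ k := by
  have htT : t ∈ T := ht.1.2
  have htpos : 0 < t := ht.1.1
  have hmul : ∀ n : ℕ, 0 < n → t * n ∈ T := by
    intro n hn
    induction n with
    | zero => omega
    | succ n ih =>
      rcases Nat.eq_zero_or_pos n with h | h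
      · subst h; simpa using htT
      · have h2 := hadd _ (ih h) _ htT
        have h3 : t * n + t = t * (n + 1) := by ring
        rwa [h3] at h2
  intro k hk
  induction k using Nat.strong_induction_on with
  | _ k IH =>
    rcases Nat.eq_zero_or_pos k with rfl | hk0
    · exact dvd_zero t
    rcases lt_or_ge k t with hlt | hle
    · have := ht.2 ⟨hk0, hk⟩; omega
    have hsub : k - t ∈ T := by
      rcases Nat.lt_or_ge D 2 with h1 | h2
      · have hD1 : D = 1 := by omega
        subst hD1
        exact hmod k hk (k - t) (by simp [Nat.mod_one])
      · have hmem : k + t * (D - 1) ∈ T := hadd _ hk _ (hmul (D - 1) (by omega))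
        have h5 : t * D = t * (D - 1) + t := by
          conv_lhs => rw [show D = (D - 1) + 1 by omega]
          ring
        apply hmod _ hmem
        have h6 : k + t * (D - 1) = (k - t) + t * D := by omega
        rw [h6, Nat.add_mul_mod_self_right]
    have hdvd := IH (k - t) (by omega) hsub
    obtain ⟨c, hc⟩ := hdvd
    exact ⟨c + 1, by rw [Nat.mul_add, mul_one]; omega⟩

end aux

section field

variable {F : Type*} [Field F] [Fintype F] {p d : ℕ}

lemma frob_fix (hcard : Fintype.card F = p ^ d) (z : F) : z ^ p ^ d = z := by
  rw [← hcard]; exact FiniteField.pow_card z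

lemma frob_shift (hcard : Fintype.card F = p ^ d) (k t : ℕ) (z : F) :
    z ^ p ^ (k + d * t) = z ^ p ^ k := by
  induction t with
  | zero => simp
  | succ t ih =>
    have h : k + d * (t + 1) = d + (k + d * t) := by ring
    rw [h, pow_add, pow_mul, frob_fix hcard, ih]

lemma frob_congr (hcard : Fintype.card F = p ^ d) {k k' : ℕ} (h : k ≡ k' [MOD d]) (z : F) :
    z ^ p ^ k = z ^ p ^ k' := by
  rcases le_total k k' with hle | hle
  · obtain ⟨t, ht⟩ := (Nat.modEq_iff_dvd' hle).mp h
    have : k' = k + d * t := by omega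
    rw [this, frob_shift hcard]
  · obtain ⟨t, ht⟩ := (Nat.modEq_iff_dvd' hle).mp h.symm
    have : k = k' + d * t := by omega
    rw [this, frob_shift hcard]

variable (G : Subgroup (Equiv.Perm F))

lemma SF_one : scalarFrob G p 1 0 := ⟨1, G.one_mem, fun z => by simp⟩

lemma SF_ne (hp0 : p ≠ 0) [Nontrivial F] {a : F} {k : ℕ}
    (h : scalarFrob G p a k) : a ≠ 0 := by
  obtain ⟨g, _, hf⟩ := h
  intro ha
  have h0 : g 0 = 0 := by rw [hf]; simp [zero_pow (pow_ne_zero k hp0)]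
  have h1 : g 1 = 0 := by rw [hf, ha]; ring
  exact one_ne_zero (g.injective (h1.trans h0.symm))

lemma SF_mul {a b : F} {k l : ℕ} (ha : scalarFrob G p a k) (hb : scalarFrob G p b l) :
    scalarFrob G p (a * b ^ p ^ k) (k + l) := by
  obtain ⟨g, hg, hgf⟩ := ha
  obtain ⟨h, hh, hhf⟩ := hb
  refine ⟨g * h, mul_mem hg hh, fun z => ?_⟩
  rw [Equiv.Perm.mul_apply, hhf, hgf, mul_pow, ← pow_mul, ← pow_add, add_comm l k]
  ring

lemma SF_div {a b : F} {k : ℕ} (hb0 : b ≠ 0)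
    (ha : scalarFrob G p a k) (hb : scalarFrob G p b k) :
    scalarFrob G p (a * b⁻¹) 0 := by
  obtain ⟨g, hg, hgf⟩ := ha
  obtain ⟨h, hh, hhf⟩ := hb
  refine ⟨g * h⁻¹, mul_mem hg (inv_mem hh), fun z => ?_⟩
  have hz : b * (h⁻¹ z) ^ p ^ k = z := by
    rw [← hhf]; exact h.apply_symm_apply z
  have hz2 : ((h⁻¹ : Equiv.Perm F) z) ^ p ^ k = b⁻¹ * z := by
    exact mul_left_cancel₀ hb0 (by rw [hz, mul_inv_cancel_left₀ hb0])
  rw [Equiv.Perm.mul_apply, hgf, hz2]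
  ring

lemma SF_congr (hcard : Fintype.card F = p ^ d) {a : F} {k k' : ℕ} (h : k ≡ k' [MOD d])
    (ha : scalarFrob G p a k) : scalarFrob G p a k' := by
  obtain ⟨g, hg, hgf⟩ := ha
  exact ⟨g, hg, fun z => by rw [hgf, frob_congr hcard h]⟩

lemma SF_pow {w : F} {c : ℕ} (hw : scalarFrob G p w c) :
    ∀ i : ℕ, scalarFrob G p (w ^ ∑ t ∈ Finset.range i, (p ^ c) ^ t) (c * i) := by
  intro i
  induction i with
  | zero => simpa using SF_one G
  | succ i ih =>
    have h := SF_mul G hw ih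
    have hN : ∑ t ∈ Finset.range (i + 1), (p ^ c) ^ t
        = 1 + (∑ t ∈ Finset.range i, (p ^ c) ^ t) * p ^ c := by
      rw [Finset.sum_range_succ']
      simp [pow_succ, ← Finset.sum_mul, add_comm]
    have hv : w * (w ^ ∑ t ∈ Finset.range i, (p ^ c) ^ t) ^ p ^ c
        = w ^ ∑ t ∈ Finset.range (i + 1), (p ^ c) ^ t := by
      rw [hN, pow_add, pow_one, ← pow_mul]
    have he : c + c * i = c * (i + 1) := by ring
    rwa [hv, he] at h

end field

section bstab

variable {F : Type*} [Field F]

def blockStab (G : Subgroup (Equiv.Perm F)) (P : Set F) : Subgroup (Equiv.Perm F) where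
  carrier := {g | g ∈ G ∧ ⇑g '' P = P}
  one_mem' := ⟨G.one_mem, by simp⟩
  mul_mem' := by
    rintro a b ⟨haG, haP⟩ ⟨hbG, hbP⟩
    exact ⟨mul_mem haG hbG, by rw [Equiv.Perm.coe_mul, Set.image_comp, hbP, haP]⟩
  inv_mem' := by
    rintro a ⟨haG, haP⟩
    refine ⟨inv_mem haG, ?_⟩
    conv_lhs => rw [← haP]
    rw [← Set.image_comp]
    simp

lemma mem_blockStab {G : Subgroup (Equiv.Perm F)} {P : Set F} {g : Equiv.Perm F} :
    g ∈ blockStab G P ↔ g ∈ G ∧ ⇑g '' P = P := Iff.rfl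

lemma SF_of_blockStab {G : Subgroup (Equiv.Perm F)} {P : Set F} {p : ℕ} {a : F} {k : ℕ}
    (h : scalarFrob (blockStab G P) p a k) : scalarFrob G p a k := by
  obtain ⟨g, hg, hf⟩ := h
  exact ⟨g, hg.1, hf⟩

lemma coset_cycle (x : ℕ) (w : F) (K : Set F) (hK1 : (1 : F) ∈ K)
    (hKmul : ∀ a ∈ K, ∀ b ∈ K, a * b ∈ K)
    (Kpow : ∀ a ∈ K, ∀ n : ℕ, a ^ n ∈ K) (M : ℕ)
    (hc : w ^ (∑ t ∈ Finset.range M, x ^ t) ∈ K) :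
    ∀ t : ℕ, w ^ (∑ u ∈ Finset.range (M * t), x ^ u) ∈ K := by
  intro t
  induction t with
  | zero => simpa using hK1
  | succ t ih =>
    have h1 : M * (t + 1) = M * t + M := by ring
    rw [h1, aux_gsum_add, pow_add, mul_comm (x ^ (M * t)), pow_mul]
    exact hKmul _ ih _ (Kpow _ hc _)

lemma coset_reduce (x : ℕ) (w : F) (K : Set F) (hK1 : (1 : F) ∈ K)
    (hKmul : ∀ a ∈ K, ∀ b ∈ K, a * b ∈ K)
    (Kpow : ∀ a ∈ K, ∀ n : ℕ, a ^ n ∈ K) (M : ℕ) (hM : 0 < M)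
    (hc : w ^ (∑ t ∈ Finset.range M, x ^ t) ∈ K) :
    ∀ i : ℕ, ∃ i' < M, ∃ k ∈ K,
      w ^ (∑ t ∈ Finset.range i, x ^ t) = w ^ (∑ t ∈ Finset.range i', x ^ t) * k := by
  intro i
  refine ⟨i % M, Nat.mod_lt _ hM,
    (w ^ (∑ u ∈ Finset.range (M * (i / M)), x ^ u)) ^ x ^ (i % M),
    Kpow _ (coset_cycle x w K hK1 hKmul Kpow M hc _) _, ?_⟩
  conv_lhs => rw [← Nat.mod_add_div i M]
  rw [aux_gsum_add, pow_add, mul_comm (x ^ (i % M)), pow_mul]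

end bstab
theorem stmt_12 {F : Type*} [Field F] [Fintype F] (p d : ℕ) (hp : p.Prime) (hd : 0 < d)
    (hcard : Fintype.card F = p ^ d)
    (G : Subgroup (Equiv.Perm F))
    (hAGL : ∀ g ∈ G, ∃ (a c : F) (k : ℕ), ∀ z : F, g z = a * z ^ p ^ k + c)
    (h2trans : ∀ x y x' y' : F, x ≠ y → x' ≠ y' → ∃ g ∈ G, g x = x' ∧ g y = y')
    (s : ℕ) (hs : IsLeast {k | 0 < k ∧ ∃ a : F, a ≠ 0 ∧ scalarFrob G p a k} s)
    (m : ℕ) (hm : IsLeast {k | 0 < k ∧ scalarFrob G p 1 (k * s)} m)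
    (P : Set F) (hP0 : ∀ z ∈ P, z ≠ 0) (hP1 : (1 : F) ∈ P) :
    (∀ g ∈ G, g 0 = 0 → (⇑g '' P = P ∨ (⇑g '' P) ∩ P = ∅)) ↔
      ∃ e : ℕ, 0 < e ∧ e ∣ m ∧
        ∃ K : Set F, K ⊆ {a : F | scalarFrob G p a 0} ∧ (1 : F) ∈ K ∧
          (∀ x ∈ K, ∀ y ∈ K, x * y ∈ K) ∧ (∀ x ∈ K, x⁻¹ ∈ K) ∧
          ∃ w : F, scalarFrob G p w (e * s) ∧
            w ^ ((p ^ (e * s * (m / e)) - 1) / (p ^ (e * s) - 1)) ∈ K ∧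
            P = {v : F | ∃ i < m / e, ∃ k ∈ K,
              v = w ^ ((p ^ (e * s * i) - 1) / (p ^ (e * s) - 1)) * k} := by
  haveI : Nontrivial F := Fintype.one_lt_card_iff_nontrivial.mp
    (by rw [hcard]; exact Nat.one_lt_pow hd.ne' hp.one_lt)
  have hp0 : p ≠ 0 := hp.pos.ne'
  have hs_pos : 0 < s := hs.1.1
  have hm_pos : 0 < m := hm.1.1
  have divS : ∀ (a : F) (k : ℕ), a ≠ 0 → scalarFrob G p a k → s ∣ k := by
    have h := least_dvd_all (T := {k : ℕ | ∃ a : F, a ≠ 0 ∧ scalarFrob G p a k}) hd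
      (fun k hk l hl => by
        obtain ⟨a, ha, hA⟩ := hk
        obtain ⟨b, hb, hB⟩ := hl
        exact ⟨a * b ^ p ^ k, mul_ne_zero ha (pow_ne_zero _ hb), SF_mul G hA hB⟩)
      (fun k hk k' hmod => by
        obtain ⟨a, ha, hA⟩ := hk
        exact ⟨a, ha, SF_congr G hcard hmod hA⟩)
      hs
    exact fun a k ha hk => h k ⟨a, ha, hk⟩
  have divM : ∀ j : ℕ, scalarFrob G p 1 (j * s) → m ∣ j := by
    have h := least_dvd_all (T := {j : ℕ | scalarFrob G p 1 (j * s)}) hd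
      (fun j hj l hl => by
        have h2 := SF_mul G hj hl
        have hv : (1 : F) * 1 ^ p ^ (j * s) = 1 := by simp
        have he : j * s + l * s = (j + l) * s := by ring
        rwa [hv, he] at h2)
      (fun j hj j' hmod => SF_congr G hcard (Nat.ModEq.mul_right s hmod) hj)
      hm
    exact h
  have hform : ∀ g ∈ G, g 0 = 0 → ∃ (a : F) (k : ℕ), a ≠ 0 ∧ ∀ z : F, g z = a * z ^ p ^ k := by
    intro g hg h0
    obtain ⟨a, c, k, hf⟩ := hAGL g hg
    have h00 := hf 0
    rw [h0, zero_pow (pow_ne_zero k hp0), mul_zero, zero_add] at h00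
    have hf' : ∀ z : F, g z = a * z ^ p ^ k := by intro z; rw [hf z, ← h00, add_zero]
    refine ⟨a, k, ?_, hf'⟩
    intro ha
    have h1 : g 1 = 0 := by rw [hf' 1, ha]; ring
    have h01 : g 0 = 0 := by rw [hf' 0]; simp [zero_pow (pow_ne_zero k hp0)]
    exact one_ne_zero (g.injective (h1.trans h01.symm))
  constructor
  · -- forward direction
    intro hblock
    set S := blockStab G P with hSdef
    have hstab1 : ∀ gg : Equiv.Perm F, gg ∈ G → gg 0 = 0 → gg 1 = 1 → gg ∈ S := by
      intro gg hg h0 h1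
      have himg : ⇑gg '' P = P := by
        rcases hblock gg hg h0 with h | h
        · exact h
        · exfalso
          have hmem : (1 : F) ∈ (⇑gg '' P) ∩ P := ⟨⟨1, hP1, h1⟩, hP1⟩
          rw [h] at hmem
          exact hmem
      exact mem_blockStab.mpr ⟨hg, himg⟩
    have hLm : scalarFrob S p 1 (m * s) := by
      obtain ⟨gg, hg, hgf⟩ := hm.1.2
      refine ⟨gg, hstab1 gg hg ?_ ?_, hgf⟩
      · rw [hgf]; simp [zero_pow (pow_ne_zero _ hp0)]
      · rw [hgf]; simp
    set TE : Set ℕ := {j | ∃ a : F, a ≠ 0 ∧ scalarFrob S p a (j * s)} with hTEdef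
    have hmTE : m ∈ TE := ⟨1, one_ne_zero, hLm⟩
    have hsetne : {j : ℕ | 0 < j ∧ j ∈ TE}.Nonempty := ⟨m, hm_pos, hmTE⟩
    set e := sInf {j : ℕ | 0 < j ∧ j ∈ TE} with hedef
    have heL : IsLeast {j : ℕ | 0 < j ∧ j ∈ TE} e :=
      ⟨Nat.sInf_mem hsetne, fun b hb => Nat.sInf_le hb⟩
    have hTEdvd : ∀ j ∈ TE, e ∣ j := by
      refine least_dvd_all hd ?_ ?_ heL
      · intro j hj l hl
        obtain ⟨a, ha, hA⟩ := hj
        obtain ⟨b, hb, hB⟩ := hl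
        have h := SF_mul S hA hB
        have he2 : j * s + l * s = (j + l) * s := by ring
        rw [he2] at h
        exact ⟨_, mul_ne_zero ha (pow_ne_zero _ hb), h⟩
      · intro j hj j' hmod
        obtain ⟨a, ha, hA⟩ := hj
        exact ⟨a, ha, SF_congr S hcard (Nat.ModEq.mul_right s hmod) hA⟩
    have hepos : 0 < e := heL.1.1
    obtain ⟨w, hwne0, hLw⟩ := heL.1.2
    have hedvdm : e ∣ m := hTEdvd m hmTE
    set x := p ^ (e * s) with hxdef
    have hes : e * s ≠ 0 := Nat.mul_ne_zero hepos.ne' hs_pos.ne'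
    have hx2 : 2 ≤ x := Nat.one_lt_pow hes hp.one_lt
    have hNdef : ∀ i : ℕ, (p ^ (e * s * i) - 1) / (p ^ (e * s) - 1)
        = ∑ t ∈ Finset.range i, x ^ t := by
      intro i
      rw [pow_mul]
      exact aux_geom_div x i hx2
    set M := m / e with hMdef
    have heM : e * M = m := Nat.mul_div_cancel' hedvdm
    have hMpos : 0 < M := by
      rcases Nat.eq_zero_or_pos M with h | h
      · rw [h, mul_zero] at heM; omega
      · exact h
    set K : Set F := {a : F | scalarFrob S p a 0} with hKdef
    have hK1 : (1 : F) ∈ K := SF_one S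
    have hKmul : ∀ a ∈ K, ∀ b ∈ K, a * b ∈ K := by
      intro a ha b hb
      have h := SF_mul S ha hb
      have hv : a * b ^ p ^ 0 = a * b := by rw [pow_zero, pow_one]
      rw [hv] at h
      exact h
    have hKne : ∀ a ∈ K, a ≠ 0 := fun a ha => SF_ne S hp0 ha
    have hKinv : ∀ a ∈ K, a⁻¹ ∈ K := by
      intro a ha
      have h := SF_div S (hKne a ha) (SF_one S) ha
      have hv : (1 : F) * a⁻¹ = a⁻¹ := one_mul _
      rw [hv] at h
      exact h
    have Kpow : ∀ a ∈ K, ∀ n : ℕ, a ^ n ∈ K := by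
      intro a ha n
      induction n with
      | zero => simpa using hK1
      | succ n ih => rw [pow_succ]; exact hKmul _ ih _ ha
    have hLwi : ∀ i : ℕ, scalarFrob S p (w ^ ∑ t ∈ Finset.range i, x ^ t) (e * s * i) :=
      fun i => SF_pow S hLw i
    have hLm' : scalarFrob S p 1 (e * s * M) := by
      have h : e * s * M = m * s := by rw [← heM]; ring
      rw [h]
      exact hLm
    have hcK : w ^ (∑ t ∈ Finset.range M, x ^ t) ∈ K := by
      have h := SF_div S one_ne_zero (hLwi M) hLm'
      have hv : w ^ (∑ t ∈ Finset.range M, x ^ t) * (1 : F)⁻¹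
          = w ^ (∑ t ∈ Finset.range M, x ^ t) := by rw [inv_one, mul_one]
      rw [hv] at h
      exact h
    refine ⟨e, hepos, hedvdm, K, ?_, hK1, hKmul, hKinv, w, SF_of_blockStab hLw, ?_, ?_⟩
    · intro a ha
      exact SF_of_blockStab ha
    · rw [hNdef]
      exact hcK
    · ext v
      simp only [Set.mem_setOf_eq]
      constructor
      · intro hv
        have hvne := hP0 v hv
        obtain ⟨gg, hgG, h0, h1⟩ := h2trans 0 1 0 v zero_ne_one (Ne.symm hvne)
        have hggS : gg ∈ S := by
          refine mem_blockStab.mpr ⟨hgG, ?_⟩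
          rcases hblock gg hgG h0 with h | h
          · exact h
          · exfalso
            have hmem : v ∈ (⇑gg '' P) ∩ P := ⟨⟨1, hP1, h1⟩, hv⟩
            rw [h] at hmem
            exact hmem
        obtain ⟨a, k0, ha, hgf⟩ := hform gg hgG h0
        have hav : a = v := by
          have h := hgf 1
          rw [h1, one_pow, mul_one] at h
          exact h.symm
        have hLv : scalarFrob S p a k0 := ⟨gg, hggS, hgf⟩
        obtain ⟨j, hj⟩ := divS a k0 ha (SF_of_blockStab hLv)
        have hjTE : j ∈ TE := ⟨a, ha, by rw [mul_comm j s, ← hj]; exact hLv⟩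
        obtain ⟨i₀, hi₀⟩ := hTEdvd j hjTE
        have hLv' : scalarFrob S p a (e * s * i₀) := by
          have hexp : e * s * i₀ = k0 := by rw [hj, hi₀]; ring
          rw [hexp]
          exact hLv
        have hdiv : (a * (w ^ (∑ t ∈ Finset.range i₀, x ^ t))⁻¹) ∈ K :=
          SF_div S (pow_ne_zero _ hwne0) hLv' (hLwi i₀)
        obtain ⟨i, hi, κ, hκ, hred⟩ := coset_reduce x w K hK1 hKmul Kpow M hMpos hcK i₀
        refine ⟨i, hi, κ * (a * (w ^ (∑ t ∈ Finset.range i₀, x ^ t))⁻¹),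
          hKmul _ hκ _ hdiv, ?_⟩
        rw [hNdef]
        have hne : w ^ (∑ t ∈ Finset.range i₀, x ^ t) ≠ 0 := pow_ne_zero _ hwne0
        rw [← hav, ← mul_assoc, ← mul_assoc, ← hred,
          mul_comm (w ^ ∑ t ∈ Finset.range i₀, x ^ t) a, mul_inv_cancel_right₀ hne]
      · rintro ⟨i, hi, k, hk, rfl⟩
        rw [hNdef]
        have hLtot : scalarFrob S p (w ^ (∑ t ∈ Finset.range i, x ^ t) * k) (e * s * i) := by
          have h := SF_mul S (hk : scalarFrob S p k 0) (hLwi i)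
          have hv : k * (w ^ (∑ t ∈ Finset.range i, x ^ t)) ^ p ^ 0
              = w ^ (∑ t ∈ Finset.range i, x ^ t) * k := by
            rw [pow_zero, pow_one, mul_comm]
          rwa [hv, zero_add] at h
        obtain ⟨gg, hggS, hggf⟩ := hLtot
        have h1 : gg 1 = w ^ (∑ t ∈ Finset.range i, x ^ t) * k := by rw [hggf]; simp
        have himgP : ⇑gg '' P = P := (mem_blockStab.mp hggS).2
        rw [← himgP]
        exact ⟨1, hP1, h1⟩
  · -- backward direction
    rintro ⟨e, hepos, hem, K, hKH, hK1, hKmul, hKinv, w, hw, hwK, hPeq⟩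
    intro g hg hg0
    set x := p ^ (e * s) with hxdef
    have hes : e * s ≠ 0 := Nat.mul_ne_zero hepos.ne' hs_pos.ne'
    have hx2 : 2 ≤ x := Nat.one_lt_pow hes hp.one_lt
    have hNdef : ∀ i : ℕ, (p ^ (e * s * i) - 1) / (p ^ (e * s) - 1)
        = ∑ t ∈ Finset.range i, x ^ t := by
      intro i
      rw [pow_mul]
      exact aux_geom_div x i hx2
    set M := m / e with hMdef
    have heM : e * M = m := Nat.mul_div_cancel' hem
    have hMpos : 0 < M := by
      rcases Nat.eq_zero_or_pos M with h | h
      · rw [h, mul_zero] at heM; omega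
      · exact h
    rw [hNdef] at hwK
    have hPeq' : P = {v : F | ∃ i < M, ∃ k ∈ K, v = w ^ (∑ t ∈ Finset.range i, x ^ t) * k} := by
      rw [hPeq]
      simp only [hxdef, hNdef]
    have Kpow : ∀ a ∈ K, ∀ n : ℕ, a ^ n ∈ K := by
      intro a ha n
      induction n with
      | zero => simpa using hK1
      | succ n ih => rw [pow_succ]; exact hKmul _ ih _ ha
    have hwne : w ≠ 0 := SF_ne G hp0 hw
    have hSFwi : ∀ i : ℕ, scalarFrob G p (w ^ ∑ t ∈ Finset.range i, x ^ t) (e * s * i) :=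
      fun i => SF_pow G hw i
    have himage : ∀ (i : ℕ) (κ : F), κ ∈ K → ∀ gg : Equiv.Perm F,
        (∀ z : F, gg z = w ^ (∑ t ∈ Finset.range i, x ^ t) * κ * z ^ p ^ (e * s * i)) →
        ⇑gg '' P = P := by
      intro i κ hκ gg hggf
      have hexp : p ^ (e * s * i) = x ^ i := by rw [hxdef, ← pow_mul]
      have hsub : ⇑gg '' P ⊆ P := by
        rintro _ ⟨v, hv, rfl⟩
        rw [hPeq'] at hv ⊢
        obtain ⟨l, hl, k, hk, rfl⟩ := hv
        obtain ⟨i', hi', k', hk', hred⟩ :=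
          coset_reduce x w K hK1 hKmul Kpow M hMpos hwK (i + l)
        refine ⟨i', hi', k' * (κ * k ^ x ^ i),
          hKmul _ hk' _ (hKmul _ hκ _ (Kpow _ hk _)), ?_⟩
        rw [hggf, hexp]
        have h1 : (w ^ (∑ t ∈ Finset.range l, x ^ t) * k) ^ x ^ i
            = w ^ (x ^ i * ∑ t ∈ Finset.range l, x ^ t) * k ^ x ^ i := by
          rw [mul_pow, ← pow_mul, mul_comm (∑ t ∈ Finset.range l, x ^ t)]
        rw [h1]
        have h3 : w ^ (∑ t ∈ Finset.range i, x ^ t) * w ^ (x ^ i * ∑ t ∈ Finset.range l, x ^ t)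
            = w ^ (∑ t ∈ Finset.range i', x ^ t) * k' := by
          rw [← pow_add, ← aux_gsum_add, hred]
        linear_combination (κ * k ^ x ^ i) * h3
      exact Set.eq_of_subset_of_ncard_le hsub
        (le_of_eq (Set.ncard_image_of_injective P gg.injective).symm) (Set.toFinite P)
    by_cases hdis : (⇑g '' P) ∩ P = ∅
    · exact Or.inr hdis
    left
    obtain ⟨y, hy1, hy2⟩ : ∃ y, y ∈ ⇑g '' P ∧ y ∈ P := by
      obtain ⟨y, hy⟩ := Set.nonempty_iff_ne_empty.mpr hdis
      exact ⟨y, hy.1, hy.2⟩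
    obtain ⟨u, huP, huy⟩ := hy1
    have hu' : u ∈ {v : F | ∃ i < M, ∃ k ∈ K, v = w ^ (∑ t ∈ Finset.range i, x ^ t) * k} := by
      rw [← hPeq']; exact huP
    have hy' : y ∈ {v : F | ∃ i < M, ∃ k ∈ K, v = w ^ (∑ t ∈ Finset.range i, x ^ t) * k} := by
      rw [← hPeq']; exact hy2
    obtain ⟨l₁, hl₁, k₁, hk₁, hu⟩ := hu'
    obtain ⟨l₂, hl₂, k₂, hk₂, hyv⟩ := hy'
    have hSF1 : scalarFrob G p (w ^ (∑ t ∈ Finset.range l₁, x ^ t) * k₁) (e * s * l₁) := by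
      have h := SF_mul G (hKH hk₁) (hSFwi l₁)
      have hv : k₁ * (w ^ (∑ t ∈ Finset.range l₁, x ^ t)) ^ p ^ 0
          = w ^ (∑ t ∈ Finset.range l₁, x ^ t) * k₁ := by
        rw [pow_zero, pow_one, mul_comm]
      rwa [hv, zero_add] at h
    have hSF2 : scalarFrob G p (w ^ (∑ t ∈ Finset.range l₂, x ^ t) * k₂) (e * s * l₂) := by
      have h := SF_mul G (hKH hk₂) (hSFwi l₂)
      have hv : k₂ * (w ^ (∑ t ∈ Finset.range l₂, x ^ t)) ^ p ^ 0
          = w ^ (∑ t ∈ Finset.range l₂, x ^ t) * k₂ := by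
        rw [pow_zero, pow_one, mul_comm]
      rwa [hv, zero_add] at h
    obtain ⟨h₁, hh₁G, hh₁f⟩ := hSF1
    obtain ⟨h₂, hh₂G, hh₂f⟩ := hSF2
    have hh₁P : ⇑h₁ '' P = P := himage l₁ k₁ hk₁ h₁ hh₁f
    have hh₂P : ⇑h₂ '' P = P := himage l₂ k₂ hk₂ h₂ hh₂f
    have hh₁0 : h₁ 0 = 0 := by rw [hh₁f]; simp [zero_pow (pow_ne_zero _ hp0)]
    have hh₂0 : h₂ 0 = 0 := by rw [hh₂f]; simp [zero_pow (pow_ne_zero _ hp0)]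
    have hh₁1 : h₁ 1 = u := by rw [hh₁f, one_pow, mul_one, ← hu]
    have hh₂1 : h₂ 1 = y := by rw [hh₂f, one_pow, mul_one, ← hyv]
    set f := h₂⁻¹ * (g * h₁) with hfdef
    have hfG : f ∈ G := mul_mem (inv_mem hh₂G) (mul_mem hg hh₁G)
    have hfapp : ∀ z : F, f z = h₂⁻¹ (g (h₁ z)) := fun z => rfl
    have hf0 : f 0 = 0 := by
      rw [hfapp, hh₁0, hg0]
      exact h₂.injective (by rw [Equiv.Perm.inv_def, Equiv.apply_symm_apply, hh₂0])
    have hf1 : f 1 = 1 := by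
      rw [hfapp, hh₁1, huy]
      exact h₂.injective (by rw [Equiv.Perm.inv_def, Equiv.apply_symm_apply, hh₂1])
    obtain ⟨a', k', ha', hff⟩ := hform f hfG hf0
    have ha1 : a' = 1 := by
      have h := hff 1
      rw [hf1, one_pow, mul_one] at h
      exact h.symm
    rw [ha1] at hff
    obtain ⟨j', hj'⟩ := divS 1 k' one_ne_zero ⟨f, hfG, hff⟩
    obtain ⟨t, htt⟩ := divM j'
      ⟨f, hfG, fun z => by rw [hff z, hj', mul_comm s j']⟩
    have hMtK : w ^ (∑ u ∈ Finset.range (M * t), x ^ u) ∈ K :=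
      coset_cycle x w K hK1 hKmul Kpow M hwK t
    have hfP : ⇑f '' P = P := by
      apply himage (M * t) ((w ^ (∑ u ∈ Finset.range (M * t), x ^ u))⁻¹) (hKinv _ hMtK) f
      intro z
      rw [hff z, mul_inv_cancel₀ (pow_ne_zero _ hwne)]
      have hexp : e * s * (M * t) = k' := by rw [hj', htt, ← heM]; ring
      rw [hexp]
    have hg2 : g = h₂ * f * h₁⁻¹ := by rw [hfdef]; group
    have hh₁inv : ⇑h₁⁻¹ '' P = P := by
      conv_lhs => rw [← hh₁P]
      rw [← Set.image_comp]
      simp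
    rw [hg2, Equiv.Perm.coe_mul, Equiv.Perm.coe_mul, Set.image_comp, Set.image_comp,
      hh₁inv, hfP, hh₂P]
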